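/- Let R be a ring and P a totally faithful right R-module. If f : N → M is a morphism of left R-modules such that P ⊗_R f : P ⊗_R N → P ⊗_R M is an isomorphism of abelian groups, then f is an isomorphism. -/
import Mathlib


open TensorProduct

/-- A right `R`-module `P` (over a commutative ring, so right = left modules)
is *totally faithful* if for every left `R`-module `M` and every `m ∈ M`,
`p ⊗ₜ m = 0` for all `p ∈ P` implies `m = 0`. -/
def TotallyFaithful (R : Type*) [CommRing R] (P : Type*) [AddCommGroup P] [Module R P] : Prop :=
  ∀ (M : Type) [AddCommGroup M] [Module R M] (m : M),
    (∀ p : P, (p ⊗ₜ[R] m : P ⊗[R] M) = 0) → m = 0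

/-- If `P` is totally faithful and `P ⊗_R f` is an isomorphism (a bijection of the
underlying abelian groups), then `f` is an isomorphism. -/
theorem totallyFaithful_reflects_isomorphism
    {R : Type} [CommRing R] {P : Type} [AddCommGroup P] [Module R P]
    (hP : TotallyFaithful R P)
    {N M : Type} [AddCommGroup N] [Module R N] [AddCommGroup M] [Module R M]
    (f : N →ₗ[R] M) (hf : Function.Bijective (LinearMap.lTensor P f)) :
    Function.Bijective f := by
  constructor
  · rw [injective_iff_map_eq_zero]
    intro n hn
    apply hP
    intro p
    apply hf.injective
    simp [LinearMap.lTensor_tmul, hn]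
  · intro m
    set Q := M ⧸ LinearMap.range f with hQ
    have hq : ∀ p : P, (p ⊗ₜ[R] (Submodule.mkQ (LinearMap.range f) m) : P ⊗[R] Q) = 0 := by
      intro p
      obtain ⟨x, hx⟩ := hf.surjective (p ⊗ₜ[R] m)
      have : (LinearMap.lTensor P (Submodule.mkQ (LinearMap.range f))) (p ⊗ₜ[R] m) =
          (LinearMap.lTensor P ((Submodule.mkQ (LinearMap.range f)).comp f)) x := by
        rw [LinearMap.lTensor_comp, LinearMap.comp_apply, hx]
      have hcomp : (Submodule.mkQ (LinearMap.range f)).comp f = 0 := by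
        ext n
        simp [Submodule.Quotient.mk_eq_zero]
      rw [hcomp, LinearMap.lTensor_zero] at this
      simpa using this
    have := hP Q (Submodule.mkQ (LinearMap.range f) m) hq
    rw [Submodule.mkQ_apply, Submodule.Quotient.mk_eq_zero] at this
    exact this
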